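/- For every integer k ≥ 1, the assignment W ↦ W ∩ V₀ is a bijection from the set of invariant totally isotropic subspaces W ⊆ V with dim W = k and V₋ ⊆ W onto the set of totally isotropic subspaces of V₀ of dimension k − 1; its inverse is W₀ ↦ V₋ ⊕ W₀. (This identifies the sink of the ℂ*-action on the orthogonal Grassmannian of isotropic k-planes of V with the orthogonal Grassmannian of isotropic (k−1)-planes of V₀.) -/

import Mathlib

/-- In the setting of the weight decomposition `V = V₋ ⊕ V₀ ⊕ V₊` with
one-dimensional isotropic extremal weight spaces and the `ℂ*`-action `φ` (as `t` on `V₋`,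
identity on `V₀`, `t⁻¹` on `V₊`), for every integer `k ≥ 1` the map `W ↦ W ∩ V₀` is a
bijection from the set of invariant totally isotropic subspaces `W ⊆ V` with `dim W = k` and
`V₋ ⊆ W` onto the set of totally isotropic subspaces of `V₀` of dimension `k - 1`; its
inverse is `W₀ ↦ V₋ ⊕ W₀`. -/
theorem stmt_8 {V : Type*} [AddCommGroup V] [Module ℂ V] [FiniteDimensional ℂ V]
    (B : V →ₗ[ℂ] V →ₗ[ℂ] ℂ)
    (hB : ∀ v : V, (∀ w : V, B v w = 0) → v = 0)
    (hBsymm : ∀ x y : V, B x y = B y x)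
    (Vm V0 Vp : Submodule ℂ V)
    (hV : DirectSum.IsInternal ![Vm, V0, Vp])
    (hm1 : Module.finrank ℂ Vm = 1) (hp1 : Module.finrank ℂ Vp = 1)
    (hmiso : ∀ u ∈ Vm, ∀ u' ∈ Vm, B u u' = 0)
    (hpiso : ∀ u ∈ Vp, ∀ u' ∈ Vp, B u u' = 0)
    (hvan : ∀ u ∈ Vm ⊔ Vp, ∀ w ∈ V0, B u w = 0 ∧ B w u = 0)
    (hnz : ∃ u ∈ Vm, ∃ w ∈ Vp, B u w ≠ 0)
    (φ : ℂˣ → V →ₗ[ℂ] V)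
    (hφm : ∀ (t : ℂˣ) (v : V), v ∈ Vm → φ t v = (t : ℂ) • v)
    (hφ0 : ∀ (t : ℂˣ) (v : V), v ∈ V0 → φ t v = v)
    (hφp : ∀ (t : ℂˣ) (v : V), v ∈ Vp → φ t v = ((t : ℂ)⁻¹) • v)
    (k : ℕ) (hk : 1 ≤ k) :
    Set.BijOn (fun W : Submodule ℂ V => W ⊓ V0)
      {W : Submodule ℂ V | (∀ t : ℂˣ, W.map (φ t) ≤ W) ∧
        (∀ u ∈ W, ∀ u' ∈ W, B u u' = 0) ∧ Module.finrank ℂ W = k ∧ Vm ≤ W}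
      {W0 : Submodule ℂ V | W0 ≤ V0 ∧ (∀ u ∈ W0, ∀ u' ∈ W0, B u u' = 0) ∧
        Module.finrank ℂ W0 = k - 1} ∧
    Set.InvOn (fun W0 : Submodule ℂ V => Vm ⊔ W0)
      (fun W : Submodule ℂ V => W ⊓ V0)
      {W : Submodule ℂ V | (∀ t : ℂˣ, W.map (φ t) ≤ W) ∧
        (∀ u ∈ W, ∀ u' ∈ W, B u u' = 0) ∧ Module.finrank ℂ W = k ∧ Vm ≤ W}
      {W0 : Submodule ℂ V | W0 ≤ V0 ∧ (∀ u ∈ W0, ∀ u' ∈ W0, B u u' = 0) ∧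
        Module.finrank ℂ W0 = k - 1} := by
  classical
  -- supremum of the three weight spaces is everything
  have hiSup : (⨆ i, ![Vm, V0, Vp] i) = Vm ⊔ (V0 ⊔ Vp) := by
    apply le_antisymm
    · refine iSup_le fun i => ?_
      fin_cases i
      · exact le_sup_left
      · exact le_sup_of_le_right le_sup_left
      · exact le_sup_of_le_right le_sup_right
    · exact sup_le (le_iSup_of_le 0 le_rfl)
        (sup_le (le_iSup_of_le 1 le_rfl) (le_iSup_of_le 2 le_rfl))
  have htop : Vm ⊔ (V0 ⊔ Vp) = ⊤ := by
    rw [← hiSup]; exact hV.submodule_iSup_eq_top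
  -- disjointness of Vm from V0 ⊔ Vp
  have hdisj : Disjoint Vm (V0 ⊔ Vp) := by
    have h := hV.submodule_iSupIndep 0
    have heq : (⨆ j, ⨆ _ : j ≠ (0 : Fin 3), ![Vm, V0, Vp] j) = V0 ⊔ Vp := by
      apply le_antisymm
      · refine iSup_le fun j => iSup_le fun hj => ?_
        fin_cases j
        · exact absurd rfl hj
        · exact le_sup_left
        · exact le_sup_right
      · exact sup_le (le_iSup_of_le 1 (le_iSup_of_le (by decide) le_rfl))
          (le_iSup_of_le 2 (le_iSup_of_le (by decide) le_rfl))
    simpa [heq] using h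
  have hdm0 : Disjoint Vm V0 := hdisj.mono_right le_sup_left
  -- decomposition of arbitrary vectors
  have hdec : ∀ v : V, ∃ a ∈ Vm, ∃ b ∈ V0, ∃ c ∈ Vp, v = a + b + c := by
    intro v
    have hv : v ∈ Vm ⊔ (V0 ⊔ Vp) := htop ▸ Submodule.mem_top
    obtain ⟨a, ha, x, hx, hax⟩ := Submodule.mem_sup.mp hv
    obtain ⟨b, hb, c, hc, hbc⟩ := Submodule.mem_sup.mp hx
    exact ⟨a, ha, b, hb, c, hc, by rw [← hax, ← hbc, add_assoc]⟩
  obtain ⟨um, hum, wp, hwp, hBnz⟩ := hnz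
  have hwp0 : wp ≠ 0 := by
    rintro rfl; exact hBnz (by simp)
  have hVpspan : Vp = Submodule.span ℂ {wp} := by
    symm
    apply Submodule.eq_of_le_of_finrank_le (Submodule.span_le.mpr (by simpa using hwp))
    rw [hp1, finrank_span_singleton hwp0]
  -- key structure lemma for the "sink" subspaces
  have keyA : ∀ W : Submodule ℂ V, (∀ t : ℂˣ, W.map (φ t) ≤ W) →
      (∀ u ∈ W, ∀ u' ∈ W, B u u' = 0) → Vm ≤ W → W = Vm ⊔ (W ⊓ V0) := by
    intro W hinv hiso hVmW
    refine le_antisymm ?_ (sup_le hVmW inf_le_left)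
    intro w hw
    obtain ⟨a, ha, b, hb, c, hc, hwabc⟩ := hdec w
    set t2 : ℂˣ := Units.mk0 (2 : ℂ) (by norm_num) with ht2
    set t4 : ℂˣ := Units.mk0 (4 : ℂ) (by norm_num) with ht4
    have hu2 : φ t2 w = (2 : ℂ) • a + b + (2 : ℂ)⁻¹ • c := by
      rw [hwabc, map_add, map_add, hφm t2 a ha, hφ0 t2 b hb, hφp t2 c hc, ht2]
      norm_num
    have hu4 : φ t4 w = (4 : ℂ) • a + b + (4 : ℂ)⁻¹ • c := by
      rw [hwabc, map_add, map_add, hφm t4 a ha, hφ0 t4 b hb, hφp t4 c hc, ht4]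
      norm_num
    have hcW : c ∈ W := by
      have h2 : φ t2 w ∈ W := hinv t2 (Submodule.mem_map_of_mem hw)
      have h4 : φ t4 w ∈ W := hinv t4 (Submodule.mem_map_of_mem hw)
      have hc' : c = (8/3 : ℂ) • w - (4 : ℂ) • φ t2 w + (4/3 : ℂ) • φ t4 w := by
        rw [hu2, hu4, hwabc]
        match_scalars <;> norm_num
      rw [hc']
      exact W.add_mem (W.sub_mem (W.smul_mem _ hw) (W.smul_mem _ h2)) (W.smul_mem _ h4)
    have hc0 : c = 0 := by
      have hcs : c ∈ Submodule.span ℂ {wp} := hVpspan ▸ hc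
      obtain ⟨μ, hμ⟩ := Submodule.mem_span_singleton.mp hcs
      have hBc : B um c = 0 := hiso um (hVmW hum) c hcW
      rw [← hμ, map_smul, smul_eq_mul] at hBc
      rcases mul_eq_zero.mp hBc with h | h
      · rw [← hμ, h, zero_smul]
      · exact absurd h hBnz
    have hbW : b ∈ W := by
      have hbe : b = w - a - c := by rw [hwabc]; abel
      rw [hbe]
      exact W.sub_mem (W.sub_mem hw (hVmW ha)) hcW
    rw [hwabc, hc0, add_zero]
    exact Submodule.add_mem _ (Submodule.mem_sup_left ha)
      (Submodule.mem_sup_right (Submodule.mem_inf.mpr ⟨hbW, hb⟩))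
  -- inverse identity
  have keyB : ∀ W0 : Submodule ℂ V, W0 ≤ V0 → (Vm ⊔ W0) ⊓ V0 = W0 := by
    intro W0 hle
    apply le_antisymm
    · rintro v hv
      obtain ⟨hv1, hv2⟩ := Submodule.mem_inf.mp hv
      obtain ⟨m, hm, w0, hw0, hsum⟩ := Submodule.mem_sup.mp hv1
      have hmV0 : m ∈ V0 := by
        have : m = v - w0 := by rw [← hsum]; abel
        rw [this]; exact V0.sub_mem hv2 (hle hw0)
      have hm0 : m = 0 := Submodule.disjoint_def.mp hdm0 m hm hmV0
      rw [← hsum, hm0, zero_add]; exact hw0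
    · exact le_inf le_sup_right hle
  -- rank of the sum
  have hrank : ∀ W0 : Submodule ℂ V, W0 ≤ V0 →
      Module.finrank ℂ (Vm ⊔ W0 : Submodule ℂ V) = 1 + Module.finrank ℂ W0 := by
    intro W0 hle
    have hd : Disjoint Vm W0 := hdm0.mono_right hle
    have h := Submodule.finrank_sup_add_finrank_inf_eq Vm W0
    rw [hd.eq_bot] at h
    simp only [finrank_bot, add_zero] at h
    omega
  -- maps to
  have hMapsF : Set.MapsTo (fun W : Submodule ℂ V => W ⊓ V0)
      {W : Submodule ℂ V | (∀ t : ℂˣ, W.map (φ t) ≤ W) ∧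
        (∀ u ∈ W, ∀ u' ∈ W, B u u' = 0) ∧ Module.finrank ℂ W = k ∧ Vm ≤ W}
      {W0 : Submodule ℂ V | W0 ≤ V0 ∧ (∀ u ∈ W0, ∀ u' ∈ W0, B u u' = 0) ∧
        Module.finrank ℂ W0 = k - 1} := by
    rintro W ⟨hinv, hiso, hrkW, hVmW⟩
    refine ⟨inf_le_right, fun u hu u' hu' =>
      hiso u ((Submodule.mem_inf.mp hu).1) u' ((Submodule.mem_inf.mp hu').1), ?_⟩
    have hWeq := keyA W hinv hiso hVmW
    have h := hrank (W ⊓ V0) inf_le_right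
    rw [← hWeq, hrkW] at h
    show Module.finrank ℂ ↥(W ⊓ V0) = k - 1
    omega
  have hMapsG : Set.MapsTo (fun W0 : Submodule ℂ V => Vm ⊔ W0)
      {W0 : Submodule ℂ V | W0 ≤ V0 ∧ (∀ u ∈ W0, ∀ u' ∈ W0, B u u' = 0) ∧
        Module.finrank ℂ W0 = k - 1}
      {W : Submodule ℂ V | (∀ t : ℂˣ, W.map (φ t) ≤ W) ∧
        (∀ u ∈ W, ∀ u' ∈ W, B u u' = 0) ∧ Module.finrank ℂ W = k ∧ Vm ≤ W} := by
    rintro W0 ⟨hle, hiso0, hrk0⟩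
    refine ⟨?_, ?_, ?_, le_sup_left⟩
    · intro t
      rw [Submodule.map_le_iff_le_comap]
      intro v hv
      obtain ⟨m, hm, w0, hw0, hsum⟩ := Submodule.mem_sup.mp hv
      have : φ t v = (t : ℂ) • m + w0 := by
        rw [← hsum, map_add, hφm t m hm, hφ0 t w0 (hle hw0)]
      rw [Submodule.mem_comap, this]
      exact Submodule.add_mem _ (Submodule.mem_sup_left (Vm.smul_mem _ hm))
        (Submodule.mem_sup_right hw0)
    · intro u hu u' hu'
      obtain ⟨m, hm, w0, hw0, hsum⟩ := Submodule.mem_sup.mp hu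
      obtain ⟨m', hm', w0', hw0', hsum'⟩ := Submodule.mem_sup.mp hu'
      have hmVmp : m ∈ Vm ⊔ Vp := Submodule.mem_sup_left hm
      have hmVmp' : m' ∈ Vm ⊔ Vp := Submodule.mem_sup_left hm'
      rw [← hsum, ← hsum']
      simp only [map_add, LinearMap.add_apply]
      rw [hmiso m hm m' hm', (hvan m hmVmp w0' (hle hw0')).1,
        (hvan m' hmVmp' w0 (hle hw0)).2, hiso0 w0 hw0 w0' hw0']
      ring
    · have h := hrank W0 hle
      rw [hrk0] at h
      show Module.finrank ℂ ↥(Vm ⊔ W0) = k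
      omega
  -- inverse property
  have hInv : Set.InvOn (fun W0 : Submodule ℂ V => Vm ⊔ W0)
      (fun W : Submodule ℂ V => W ⊓ V0)
      {W : Submodule ℂ V | (∀ t : ℂˣ, W.map (φ t) ≤ W) ∧
        (∀ u ∈ W, ∀ u' ∈ W, B u u' = 0) ∧ Module.finrank ℂ W = k ∧ Vm ≤ W}
      {W0 : Submodule ℂ V | W0 ≤ V0 ∧ (∀ u ∈ W0, ∀ u' ∈ W0, B u u' = 0) ∧
        Module.finrank ℂ W0 = k - 1} := by
    constructor
    · rintro W ⟨hinv, hiso, hrkW, hVmW⟩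
      exact (keyA W hinv hiso hVmW).symm
    · rintro W0 ⟨hle, _, _⟩
      exact keyB W0 hle
  exact ⟨hInv.bijOn hMapsF hMapsG, hInv⟩
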